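/- arXiv:math/0611468 — 2 statements merged into one kernel-verified Lean document; each statement's English description precedes it below -/
import Mathlib

section
/- Let θ ∈ ℝ be irrational and let Λ ⊂ (ℝ/ℤ)² be a C¹ curve that is at some point transversal to the direction (1, θ). Then the line flow t ↦ (t mod 1, θ·t mod 1) crosses Λ infinitely often; more precisely there exists T > 0 such that on every interval of length T the orbit intersects Λ at least once. -/
open Set

section IWHelpers

/-- arithmetic progression with positive step hits a translated interval -/
lemma IW_hit_pos (a b α : ℝ) (hα : 0 < α) (hab : α ≤ b - a) (x : ℝ) (K : ℕ)
    (hK : 1 ≤ K * α) :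
    ∃ j : ℕ, j ≤ K ∧ ∃ m : ℤ, a + m ≤ x + j * α ∧ x + j * α ≤ b + m := by
  classical
  set m : ℤ := ⌈x - a⌉ with hm
  have hm1 : x - a ≤ (m:ℝ) := Int.le_ceil _
  have hm2 : (m:ℝ) < x - a + 1 := Int.ceil_lt_add_one _
  have hexists : ∃ j : ℕ, a + m ≤ x + j * α := ⟨K, by push_cast; nlinarith⟩
  set j := Nat.find hexists with hj
  have hjs : a + m ≤ x + j * α := Nat.find_spec hexists
  have hjK : j ≤ K := Nat.find_le (by push_cast; nlinarith)
  refine ⟨j, hjK, m, hjs, ?_⟩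
  rcases Nat.eq_zero_or_pos j with h0 | hpos
  · rw [h0]; push_cast; nlinarith
  · have hmin := Nat.find_min hexists (show j - 1 < j from Nat.sub_lt hpos one_pos)
    push_neg at hmin
    have hcast : ((j - 1 : ℕ) : ℝ) = (j : ℝ) - 1 := by
      have : ((j - 1 : ℕ) : ℝ) = (j:ℝ) - (1:ℕ) := Nat.cast_sub hpos
      simpa using this
    rw [hcast] at hmin
    nlinarith

lemma IW_hit (a b α : ℝ) (hα : α ≠ 0) (hab : |α| ≤ b - a) (x : ℝ) (K : ℕ)
    (hK : 1 ≤ K * |α|) :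
    ∃ j : ℕ, j ≤ K ∧ ∃ m : ℤ, a + m ≤ x + j * α ∧ x + j * α ≤ b + m := by
  rcases hα.lt_or_gt with hneg | hpos
  · have habs : |α| = -α := abs_of_neg hneg
    rw [habs] at hab hK
    obtain ⟨j, hjK, m, h1, h2⟩ :=
      IW_hit_pos (-b) (-a) (-α) (by linarith) (by linarith) (-x) K hK
    exact ⟨j, hjK, -m, by push_cast at h1 h2 ⊢; constructor <;> nlinarith⟩
  · have habs : |α| = α := abs_of_pos hpos
    rw [habs] at hab hK
    exact IW_hit_pos a b α hpos hab x K hK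

/-- for irrational θ, integer combinations n·θ - m with n ≥ 1 get arbitrarily
small but nonzero -/
lemma IW_small (θ : ℝ) (hθ : Irrational θ) (ε : ℝ) (hε : 0 < ε) :
    ∃ n : ℤ, 0 < n ∧ ∃ m : ℤ, n * θ - m ≠ 0 ∧ |n * θ - m| < ε := by
  classical
  set S : AddSubgroup ℝ := AddSubgroup.closure {θ, 1} with hS
  rcases S.dense_or_cyclic with hdense | ⟨a, ha⟩
  · -- dense case
    set ε' := min ε 1 with hε'
    have hε'0 : 0 < ε' := lt_min hε one_pos
    obtain ⟨g, hgS, hg⟩ := hdense.exists_mem_open isOpen_Ioo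
      (nonempty_Ioo.2 (by linarith : (0:ℝ) < ε'))
    obtain ⟨p, q, hpq⟩ := AddSubgroup.mem_closure_pair.1 hgS
    have hgval : (p:ℝ) * θ + q = g := by
      rw [← hpq]; push_cast [zsmul_eq_mul]; ring
    have hp0 : p ≠ 0 := by
      rintro rfl
      simp only [Int.cast_zero, zero_mul, zero_add] at hgval
      have h1 : (0:ℝ) < q := hgval ▸ hg.1
      have h2 : (q:ℝ) < 1 := lt_of_lt_of_le (hgval ▸ hg.2) (min_le_right _ _)
      have : (1:ℤ) ≤ q := by exact_mod_cast h1
      have : (q:ℝ) ≥ 1 := by exact_mod_cast this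
      linarith
    rcases hp0.lt_or_gt with hneg | hpos
    · refine ⟨-p, by linarith, q, ?_, ?_⟩
      · push_cast
        intro h
        apply absurd hg.1
        nlinarith
      · push_cast
        have : -(p:ℝ) * θ - q = -g := by linarith
        rw [this, abs_neg, abs_of_pos hg.1]
        exact lt_of_lt_of_le hg.2 (min_le_left _ _)
    · refine ⟨p, hpos, -q, ?_, ?_⟩
      · push_cast
        intro h
        apply absurd hg.1
        nlinarith
      · push_cast
        have : (p:ℝ) * θ - -q = g := by linarith
        rw [this, abs_of_pos hg.1]
        exact lt_of_lt_of_le hg.2 (min_le_left _ _)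
  · -- cyclic case: contradiction with irrationality
    exfalso
    have hθS : θ ∈ S := AddSubgroup.subset_closure (by simp)
    have h1S : (1:ℝ) ∈ S := AddSubgroup.subset_closure (by simp)
    rw [ha] at hθS h1S
    obtain ⟨n, hn⟩ := AddSubgroup.mem_closure_singleton.1 hθS
    obtain ⟨k, hk⟩ := AddSubgroup.mem_closure_singleton.1 h1S
    rw [zsmul_eq_mul] at hn hk
    have hk0 : (k:ℝ) ≠ 0 := by
      intro h; rw [h, zero_mul] at hk; exact one_ne_zero hk.symm
    have hkz : k ≠ 0 := by exact_mod_cast hk0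
    apply hθ
    refine ⟨(n:ℚ) / k, ?_⟩
    have : θ * k = n := by
      rw [← hn]; linear_combination (n:ℝ) * hk
    push_cast
    field_simp
    linarith [this]

lemma IW_fst {c : ℝ → ℝ × ℝ} {v : ℝ × ℝ} {x : ℝ} (h : HasDerivAt c v x) :
    HasDerivAt (fun l => (c l).1) v.1 x := by
  simpa using ((hasDerivAt_iff_hasFDerivAt.1 h).fst).hasDerivAt

lemma IW_snd {c : ℝ → ℝ × ℝ} {v : ℝ × ℝ} {x : ℝ} (h : HasDerivAt c v x) :
    HasDerivAt (fun l => (c l).2) v.2 x := by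
  simpa using ((hasDerivAt_iff_hasFDerivAt.1 h).snd).hasDerivAt

lemma IW_coe (x y : ℝ) (k : ℤ) (h : x - y = k) :
    (↑x : AddCircle (1:ℝ)) = ↑y := by
  have hmem : x - y ∈ AddSubgroup.zmultiples (1:ℝ) :=
    ⟨k, by simp [h]⟩
  exact (QuotientAddGroup.eq_iff_sub_mem.2 hmem)
end IWHelpers

/-- an irrational winding crosses, with bounded gaps, any C¹ curve in
the torus that is somewhere transversal to the flow direction (1, θ). -/
theorem irrational_winding_crosses_transversal_curve
    (θ : ℝ) (hθ : Irrational θ)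
    (c : ℝ → ℝ × ℝ) (c' : ℝ → ℝ × ℝ)
    (hc : ∀ l ∈ Set.Icc (0:ℝ) 1, HasDerivAt c (c' l) l)
    (hc' : ContinuousOn c' (Set.Icc (0:ℝ) 1))
    (l₀ : ℝ) (hl₀ : l₀ ∈ Set.Icc (0:ℝ) 1)
    (htrans : ∀ s : ℝ, c' l₀ ≠ (s, s * θ)) :
    ∃ T > 0, ∀ t₀ : ℝ, ∃ t ∈ Set.Icc t₀ (t₀ + T), ∃ l ∈ Set.Icc (0:ℝ) 1,
      ((↑t : AddCircle (1:ℝ)), (↑(θ * t) : AddCircle (1:ℝ)))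
        = ((↑(c l).1 : AddCircle (1:ℝ)), (↑(c l).2 : AddCircle (1:ℝ))) := by
  classical
  set F : ℝ → ℝ := fun l => (c l).2 - θ * (c l).1 with hF
  -- continuity of c and F on [0,1]
  have hccont : ContinuousOn c (Icc 0 1) :=
    fun l hl => (hc l hl).continuousAt.continuousWithinAt
  have hFcont : ContinuousOn F (Icc 0 1) := by
    apply ContinuousOn.sub
    · exact continuous_snd.comp_continuousOn hccont
    · exact continuousOn_const.mul (continuous_fst.comp_continuousOn hccont)
  -- derivative of F at l₀ is nonzero
  have hd : HasDerivAt F ((c' l₀).2 - θ * (c' l₀).1) l₀ :=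
    (IW_snd (hc l₀ hl₀)).sub ((IW_fst (hc l₀ hl₀)).const_mul θ)
  have hd0 : (c' l₀).2 - θ * (c' l₀).1 ≠ 0 := by
    intro h
    apply htrans (c' l₀).1
    have h2 : (c' l₀).2 = (c' l₀).1 * θ := by linarith
    exact Prod.ext rfl h2
  -- find p ∈ [0,1] with F p ≠ F l₀
  have hev := hd.eventually_ne (c := F l₀) hd0
  rw [eventually_nhdsWithin_iff] at hev
  obtain ⟨ε, hε, hball⟩ := Metric.eventually_nhds_iff.1 hev
  obtain ⟨p, hp, hpne⟩ : ∃ p ∈ Icc (0:ℝ) 1, F p ≠ F l₀ := by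
    rcases lt_or_ge l₀ 1 with h1 | h1
    · refine ⟨min (l₀ + ε/2) 1, ⟨le_min (by linarith [hl₀.1]) zero_le_one,
        min_le_right _ _⟩, ?_⟩
      have hgt : l₀ < min (l₀ + ε/2) 1 := lt_min (by linarith) h1
      apply hball ?_ (Set.mem_compl_singleton_iff.2 hgt.ne')
      rw [Real.dist_eq, abs_of_pos (by linarith)]
      have := min_le_left (l₀ + ε/2) 1
      linarith
    · have hl1 : l₀ = 1 := le_antisymm hl₀.2 h1
      have h0 : 0 < l₀ := by rw [hl1]; norm_num
      refine ⟨max (l₀ - ε/2) 0, ⟨le_max_right _ _,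
        max_le (by linarith [hl₀.2]) zero_le_one⟩, ?_⟩
      have hlt : max (l₀ - ε/2) 0 < l₀ := max_lt (by linarith) h0
      apply hball ?_ (Set.mem_compl_singleton_iff.2 hlt.ne)
      rw [Real.dist_eq, abs_of_neg (by linarith)]
      have := le_max_left (l₀ - ε/2) 0
      linarith
  -- intermediate value: an interval [a,b] inside the image of F
  set a : ℝ := min (F p) (F l₀) with ha
  set bb : ℝ := max (F p) (F l₀) with hbb
  have hab : a < bb := min_lt_max.2 hpne
  set b : ℝ := min bb (a + 1/2) with hb
  have hab' : a < b := lt_min hab (by linarith)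
  have hsub : uIcc p l₀ ⊆ Icc (0:ℝ) 1 := uIcc_subset_Icc hp hl₀
  have hIVT := intermediate_value_uIcc (hFcont.mono hsub)
  have himage : ∀ y ∈ Icc a b, ∃ l ∈ Icc (0:ℝ) 1, F l = y := by
    intro y hy
    have hy' : y ∈ uIcc (F p) (F l₀) := by
      rw [Set.uIcc_eq_union]
      rcases le_total (F p) (F l₀) with h | h
      · left
        exact ⟨by simpa [ha, min_eq_left h] using hy.1,
          le_trans (le_trans hy.2 (min_le_left _ _)) (by simp [hbb, max_eq_right h])⟩
      · right
        exact ⟨by simpa [ha, min_eq_right h] using hy.1,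
          le_trans (le_trans hy.2 (min_le_left _ _)) (by simp [hbb, max_eq_left h])⟩
    obtain ⟨l, hl, hFl⟩ := hIVT hy'
    exact ⟨l, hsub hl, hFl⟩
  -- bound on the first coordinate of c
  obtain ⟨M0, hM0⟩ := isCompact_Icc.exists_bound_of_continuousOn
    (continuous_fst.comp_continuousOn hccont)
  set M : ℝ := max M0 0 with hM
  have hMnn : 0 ≤ M := le_max_right _ _
  have hMb : ∀ l ∈ Icc (0:ℝ) 1, |(c l).1| ≤ M := by
    intro l hl
    exact le_trans (hM0 l hl) (le_max_left _ _)
  -- small irrational combination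
  obtain ⟨n₀, hn₀, m₀, hα0, hαlt⟩ := IW_small θ hθ (b - a) (by linarith)
  set α : ℝ := n₀ * θ - m₀ with hαdef
  set K : ℕ := ⌈1/|α|⌉₊ with hK
  have hαpos : 0 < |α| := abs_pos.2 hα0
  have hK1 : 1 ≤ (K:ℝ) * |α| := by
    have h := Nat.le_ceil (1/|α|)
    calc (1:ℝ) = (1/|α|) * |α| := by field_simp
    _ ≤ (K:ℝ) * |α| := by
        apply mul_le_mul_of_nonneg_right _ (le_of_lt hαpos)
        exact h
  set T : ℝ := 2*M + 2 + (K:ℝ) * (n₀:ℝ) with hT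
  have hn₀R : (1:ℝ) ≤ (n₀:ℝ) := by exact_mod_cast hn₀
  have hTpos : 0 < T := by positivity
  refine ⟨T, hTpos, fun t₀ => ?_⟩
  set N : ℤ := ⌈t₀ + M⌉ with hN
  have hN1 : t₀ + M ≤ (N:ℝ) := Int.le_ceil _
  have hN2 : (N:ℝ) < t₀ + M + 1 := Int.ceil_lt_add_one _
  obtain ⟨j, hjK, m, hm1, hm2⟩ := IW_hit a b α hα0 (le_of_lt hαlt) ((N:ℝ) * θ) K hK1
  obtain ⟨l, hl, hFl⟩ := himage ((N:ℝ) * θ + j * α - m) ⟨by linarith, by linarith⟩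
  set n : ℤ := N + j * n₀ with hn
  set t : ℝ := (c l).1 + n with ht
  have hclM : |(c l).1| ≤ M := hMb l hl
  have hjn₀ : (0:ℝ) ≤ (j:ℝ) * (n₀:ℝ) := by positivity
  have hjn₀' : (j:ℝ) * (n₀:ℝ) ≤ (K:ℝ) * (n₀:ℝ) := by
    apply mul_le_mul_of_nonneg_right _ (by linarith)
    exact_mod_cast hjK
  have hnR : (n:ℝ) = (N:ℝ) + (j:ℝ) * (n₀:ℝ) := by
    rw [hn]; push_cast; ring
  have habs1 : -(M) ≤ (c l).1 := neg_le_of_abs_le hclM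
  have habs2 : (c l).1 ≤ M := le_of_abs_le hclM
  refine ⟨t, ⟨by rw [ht, hnR]; linarith, by rw [ht, hnR, hT]; linarith⟩, l, hl, ?_⟩
  have hkey : (c l).2 - θ * (c l).1 = (N:ℝ) * θ + j * α - m := hFl
  have h1 : t - (c l).1 = (n:ℝ) := by rw [ht]; ring
  have h2 : θ * t - (c l).2 = ((j * m₀ + m : ℤ) : ℝ) := by
    rw [ht, hnR]
    push_cast
    linear_combination -hkey - (j:ℝ) * hαdef
  have e1 := IW_coe t (c l).1 n h1
  have e2 := IW_coe (θ * t) (c l).2 (j * m₀ + m) h2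
  rw [Prod.mk.injEq]
  exact ⟨e1, e2⟩
end

section
/- Let Φ₁, Φ₂ : ℝ → ℝ be C¹ with derivatives Φ₁' = ε·γ₁, Φ₂' = ε·γ₂ in the sense γ_k(I) = ε⁻¹·dΦ_k/dξ at I = εξ. Suppose γ₁, γ₂ are constants with γ₁/γ₂ irrational, and let Λ ⊂ (ℝ/ℤ) × (ℝ/2ℤ) be a fixed C¹ curve transversal at some point to the vector (γ₁, γ₂). Then the number of ξ ∈ [0, Δ/ε] at which the point (γ₁ξ mod 1, γ₂ξ mod 2) lies on Λ is at least ⌊Δ/(ε·c)⌋ for some constant c > 0 independent of ε. -/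
lemma addCircle_coe_add_zsmul (p x : ℝ) (n : ℤ) :
    ((x + n • p : ℝ) : AddCircle p) = (x : AddCircle p) := by
  have h0 : ((n • p : ℝ) : AddCircle p) = 0 := AddCircle.coe_eq_zero_iff p |>.2 ⟨n, rfl⟩
  rw [AddCircle.coe_add, h0, add_zero]

lemma exists_small_step {α : ℝ} (h : Irrational α) {d : ℝ} (hd : 0 < d) :
    ∃ β : ℝ, 0 < β ∧ β < d ∧ ∃ q p : ℤ, (q : ℝ) * α + p = β := by
  set S := AddSubgroup.closure ({α, 1} : Set ℝ) with hS
  have hdense : Dense (S : Set ℝ) := by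
    rcases S.dense_or_cyclic with h' | ⟨a, ha⟩
    · exact h'
    · exfalso
      have hα : α ∈ S := AddSubgroup.subset_closure (by simp)
      have h1 : (1 : ℝ) ∈ S := AddSubgroup.subset_closure (by simp)
      rw [ha, AddSubgroup.mem_closure_singleton] at hα h1
      obtain ⟨n, hn⟩ := hα
      obtain ⟨k, hk⟩ := h1
      rw [zsmul_eq_mul] at hn hk
      have hk0 : (k : ℝ) ≠ 0 := by
        rintro hk0
        rw [hk0, zero_mul] at hk
        norm_num at hk
      have key : α * (k : ℝ) = (n : ℝ) := by
        calc α * (k : ℝ) = ((n : ℝ) * a) * k := by rw [hn]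
          _ = (n : ℝ) * ((k : ℝ) * a) := by ring
          _ = (n : ℝ) := by rw [hk, mul_one]
      apply h
      refine ⟨(n : ℚ) / (k : ℚ), ?_⟩
      push_cast
      rw [div_eq_iff hk0]
      exact key.symm
  obtain ⟨β, hβS, hβmem⟩ := hdense.exists_between hd
  refine ⟨β, hβmem.1, hβmem.2, ?_⟩
  rw [hS, SetLike.mem_coe, AddSubgroup.mem_closure_pair] at hβS
  obtain ⟨q, p, hpq⟩ := hβS
  exact ⟨q, p, by rw [zsmul_eq_mul, zsmul_eq_mul, mul_one] at hpq; exact_mod_cast hpq⟩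

lemma uniform_hit {α A B : ℝ} (h : Irrational α) (hAB : A < B) :
    ∃ K : ℕ, ∀ x : ℝ, ∃ j m : ℤ, |j| ≤ (K : ℤ) ∧ x + j * α - m ∈ Set.Icc A B := by
  obtain ⟨β, hβ0, hβd, q, p, hβ⟩ := exists_small_step h (sub_pos.2 hAB)
  refine ⟨⌈1 / β⌉₊ * q.natAbs, fun x => ?_⟩
  set y := x - A with hy
  set k₀ : ℕ := ⌈((⌈y⌉ : ℝ) - y) / β⌉₊ with hk₀
  have harg0 : 0 ≤ ((⌈y⌉ : ℝ) - y) / β := div_nonneg (by linarith [Int.le_ceil y]) hβ0.le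
  have hlow : (⌈y⌉ : ℝ) - y ≤ k₀ * β := by
    rw [← div_le_iff₀ hβ0]; exact Nat.le_ceil _
  have hup : (k₀ : ℝ) * β < (⌈y⌉ : ℝ) - y + β := by
    have h1 := Nat.ceil_lt_add_one harg0
    have h2 : (k₀ : ℝ) < ((⌈y⌉ : ℝ) - y) / β + 1 := by exact_mod_cast h1
    have h3 := mul_lt_mul_of_pos_right h2 hβ0
    calc (k₀ : ℝ) * β < (((⌈y⌉ : ℝ) - y) / β + 1) * β := h3
      _ = (⌈y⌉ : ℝ) - y + β := by field_simp
  have hk₀K : k₀ ≤ ⌈1 / β⌉₊ := by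
    apply Nat.ceil_le_ceil
    have hle : (↑⌈y⌉ : ℝ) - y ≤ 1 := by linarith [Int.ceil_lt_add_one y]
    exact div_le_div_of_nonneg_right hle hβ0.le |>.trans (le_refl _)
  refine ⟨k₀ * q, ⌈y⌉ - k₀ * p, ?_, ?_⟩
  · rw [abs_mul]
    have h4 : |(k₀ : ℤ)| = (k₀ : ℤ) := abs_of_nonneg (by positivity)
    rw [h4, Int.abs_eq_natAbs]
    exact_mod_cast Nat.mul_le_mul_right q.natAbs hk₀K
  · have hval : x + (↑(k₀ * q) : ℝ) * α - (↑(⌈y⌉ - k₀ * p) : ℝ)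
        = A + (y + k₀ * β - ⌈y⌉) := by
      push_cast
      rw [← hβ, hy]
      ring
    constructor
    · rw [hval]; linarith
    · rw [hval]; linarith



/-- for a linear flow ξ ↦ (γ₁ξ mod 1, γ₂ξ mod 2) with irrational
frequency ratio and a fixed C¹ curve Λ in the torus transversal at some point to
(γ₁, γ₂), there is c₀ > 0 such that for every ε > 0 the number of crossing times
ξ ∈ [0, Δ/ε] is at least ⌊Δ/(ε·c₀)⌋. -/
theorem crossing_count_lower_bound
    (γ₁ γ₂ : ℝ) (hγ₂ : γ₂ ≠ 0) (hirr : Irrational (γ₁ / γ₂))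
    (c : ℝ → ℝ × ℝ) (c' : ℝ → ℝ × ℝ)
    (hc : ∀ l ∈ Set.Icc (0:ℝ) 1, HasDerivAt c (c' l) l)
    (hcont : ContinuousOn c' (Set.Icc (0:ℝ) 1))
    (l₀ : ℝ) (hl₀ : l₀ ∈ Set.Icc (0:ℝ) 1)
    (htrans : ∀ s : ℝ, c' l₀ ≠ (s * γ₁, s * γ₂))
    (Δ : ℝ) (hΔ : 0 < Δ) :
    ∃ c₀ > 0, ∀ ε > 0, ∃ S : Finset ℝ,
      (∀ ξ ∈ S, ξ ∈ Set.Icc 0 (Δ / ε) ∧ ∃ l ∈ Set.Icc (0:ℝ) 1,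
        ((↑(γ₁ * ξ) : AddCircle (1:ℝ)), (↑(γ₂ * ξ) : AddCircle (2:ℝ)))
          = ((↑(c l).1 : AddCircle (1:ℝ)), (↑(c l).2 : AddCircle (2:ℝ)))) ∧
      Nat.floor (Δ / (ε * c₀)) ≤ S.card := by
  set α := γ₁ / γ₂ with hαdef
  set φ : ℝ → ℝ := fun l => (c l).1 - α * (c l).2 with hφdef
  have hαγ : α * γ₂ = γ₁ := div_mul_cancel₀ γ₁ hγ₂
  have hφ : ∀ l ∈ Set.Icc (0:ℝ) 1, HasDerivAt φ ((c' l).1 - α * (c' l).2) l := by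
    intro l hl
    have h1 : HasDerivAt (fun l => (c l).1) (c' l).1 l := by
      simpa using ((hc l hl).hasFDerivAt.fst).hasDerivAt
    have h2 : HasDerivAt (fun l => (c l).2) (c' l).2 l := by
      simpa using ((hc l hl).hasFDerivAt.snd).hasDerivAt
    exact h1.sub (h2.const_mul α)
  have hφ'0 : (c' l₀).1 - α * (c' l₀).2 ≠ 0 := by
    intro h0
    refine htrans ((c' l₀).2 / γ₂) ?_
    have h1 : (c' l₀).1 = α * (c' l₀).2 := by linarith
    have h2 : (c' l₀).2 / γ₂ * γ₂ = (c' l₀).2 := div_mul_cancel₀ _ hγ₂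
    have h3 : (c' l₀).2 / γ₂ * γ₁ = (c' l₀).1 := by rw [h1, hαdef]; ring
    exact Prod.ext h3.symm h2.symm
  obtain ⟨l₁, hl₁, hne⟩ : ∃ l₁ ∈ Set.Icc (0:ℝ) 1, φ l₁ ≠ φ l₀ := by
    by_contra hcon
    push_neg at hcon
    have hW : HasDerivWithinAt φ ((c' l₀).1 - α * (c' l₀).2) (Set.Icc 0 1) l₀ :=
      (hφ l₀ hl₀).hasDerivWithinAt
    have hW0 : HasDerivWithinAt φ 0 (Set.Icc 0 1) l₀ :=
      (hasDerivWithinAt_const l₀ _ (φ l₀)).congr (fun l hl => hcon l hl) (hcon l₀ hl₀)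
    exact hφ'0 ((uniqueDiffOn_Icc zero_lt_one l₀ hl₀).eq_deriv _ hW hW0)
  set I := Set.uIcc l₀ l₁ with hIdef
  have hI : I ⊆ Set.Icc 0 1 := Set.uIcc_subset_Icc hl₀ hl₁
  have hcφ : ContinuousOn φ I := fun l hl => ((hφ l (hI hl)).continuousAt).continuousWithinAt
  set A := min (φ l₀) (φ l₁) with hA
  set B := max (φ l₀) (φ l₁) with hB
  have hAB : A < B := min_lt_max.2 (Ne.symm hne)
  have himg : ∀ v ∈ Set.Icc A B, ∃ l ∈ I, φ l = v := by
    intro v hv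
    have hv' : v ∈ Set.uIcc (φ l₀) (φ l₁) := by rwa [← Set.Icc_min_max]
    obtain ⟨l, hl, hlv⟩ := intermediate_value_uIcc hcφ hv'
    exact ⟨l, hl, hlv⟩
  have hc2cont : ContinuousOn (fun l => (c l).2) I := fun l hl =>
    ((hc l (hI hl)).continuousAt.snd).continuousWithinAt
  obtain ⟨M, hM⟩ := isCompact_uIcc.exists_bound_of_continuousOn hc2cont
  have hM0 : 0 ≤ M := le_trans (norm_nonneg _) (hM l₀ Set.left_mem_uIcc)
  have h2α : Irrational (2 * α) := by
    simpa using hirr.ratCast_mul (q := 2) (by norm_num)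
  obtain ⟨K, hK⟩ := uniform_hit h2α hAB
  have hγ₂' : (0:ℝ) < |γ₂| := abs_pos.2 hγ₂
  set R := (M + 2 * K) / |γ₂| with hR
  have hR0 : 0 ≤ R := div_nonneg (by positivity) hγ₂'.le
  set W : ℕ := ⌈(2 * R + 1) * |γ₂| / 2⌉₊ + 1 with hW
  set D := 2 * W / |γ₂| with hD
  have hWD : 2 * R + 1 ≤ D := by
    have h1 : (2 * R + 1) * |γ₂| / 2 ≤ (W : ℝ) := by
      have h2 := Nat.le_ceil ((2 * R + 1) * |γ₂| / 2)
      have h3 : ((⌈(2 * R + 1) * |γ₂| / 2⌉₊ : ℝ)) ≤ (W : ℝ) := by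
        exact_mod_cast Nat.le_succ _
      linarith
    rw [hD, le_div_iff₀ hγ₂']
    linarith
  have hD0 : 0 < D := lt_of_lt_of_le (by linarith) hWD
  set s : ℤ := if 0 < γ₂ then 1 else -1 with hs
  have hsγ : (s : ℝ) * |γ₂| = γ₂ := by
    by_cases h : 0 < γ₂
    · simp [hs, h, abs_of_pos h]
    · have hneg : γ₂ < 0 := lt_of_le_of_ne (not_lt.1 h) hγ₂
      simp [hs, h, abs_of_neg hneg]
  have hsdiv : (s : ℝ) / γ₂ = 1 / |γ₂| := by
    rw [div_eq_div_iff hγ₂ (ne_of_gt hγ₂')]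
    linarith [hsγ]
  have hP : ∀ i : ℕ, ∃ ξ : ℝ, |ξ - ((i : ℝ) + 1) * D| ≤ R ∧ ∃ l ∈ Set.Icc (0:ℝ) 1,
      ((↑(γ₁ * ξ) : AddCircle (1:ℝ)), (↑(γ₂ * ξ) : AddCircle (2:ℝ)))
        = ((↑(c l).1 : AddCircle (1:ℝ)), (↑(c l).2 : AddCircle (2:ℝ))) := by
    intro i
    set n : ℤ := s * ((i : ℤ) + 1) * W with hn
    obtain ⟨j, m, hjK, hmem⟩ := hK (2 * (n : ℝ) * α)
    obtain ⟨l, hlI, hlv⟩ := himg _ hmem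
    simp only [hφdef] at hlv
    set ξ := ((c l).2 + 2 * ((n : ℝ) + j)) / γ₂ with hξ
    have hb : γ₂ * ξ = (c l).2 + 2 * ((n : ℝ) + j) := by
      rw [hξ]; field_simp
    have ha' : γ₁ * ξ = (c l).1 + m := by
      have hg : γ₁ * ξ = α * (γ₂ * ξ) := by rw [← hαγ]; ring
      rw [hg, hb]
      linear_combination -hlv
    have hcenter : 2 * (n : ℝ) / γ₂ = ((i : ℝ) + 1) * D := by
      have hn' : (n : ℝ) = (s : ℝ) * ((i : ℝ) + 1) * W := by
        rw [hn]; push_cast; ring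
      calc 2 * (n : ℝ) / γ₂ = ((i : ℝ) + 1) * (2 * W) * ((s : ℝ) / γ₂) := by
            rw [hn']; ring
        _ = ((i : ℝ) + 1) * (2 * W) * (1 / |γ₂|) := by rw [hsdiv]
        _ = ((i : ℝ) + 1) * D := by rw [hD]; ring
    refine ⟨ξ, ?_, l, hI hlI, ?_⟩
    · have hdiff : ξ - ((i : ℝ) + 1) * D = ((c l).2 + 2 * (j : ℝ)) / γ₂ := by
        rw [← hcenter, hξ]
        field_simp
        ring
      rw [hdiff, abs_div]
      rw [hR]
      apply div_le_div_of_nonneg_right ?_ hγ₂'.le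
      calc |(c l).2 + 2 * (j : ℝ)| ≤ |(c l).2| + |2 * (j : ℝ)| := abs_add_le _ _
        _ ≤ M + 2 * K := by
            have hj : |(j : ℝ)| ≤ (K : ℝ) := by exact_mod_cast hjK
            have hcl := hM l hlI
            rw [Real.norm_eq_abs] at hcl
            rw [abs_mul, abs_two]
            linarith
    · have e1 : (↑(γ₁ * ξ) : AddCircle (1:ℝ)) = ↑(c l).1 := by
        rw [ha']
        have h5 : (c l).1 + (m : ℝ) = (c l).1 + m • (1 : ℝ) := by simp
        rw [h5, addCircle_coe_add_zsmul]
      have e2 : (↑(γ₂ * ξ) : AddCircle (2:ℝ)) = ↑(c l).2 := by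
        rw [hb]
        have h6 : (c l).2 + 2 * ((n : ℝ) + j) = (c l).2 + (n + j) • (2 : ℝ) := by
          rw [zsmul_eq_mul]; push_cast; ring
        rw [h6, addCircle_coe_add_zsmul]
      rw [e1, e2]
  choose ξf hξ1 hξ2 using hP
  have hc₀pos : (0:ℝ) < D + R := by linarith
  refine ⟨D + R, hc₀pos, fun ε hε => ?_⟩
  set N := ⌊Δ / (ε * (D + R))⌋₊ with hN
  refine ⟨(Finset.range N).image ξf, ?_, ?_⟩
  · intro ξ hξmem
    simp only [Finset.mem_image, Finset.mem_range] at hξmem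
    obtain ⟨i, hiN, rfl⟩ := hξmem
    refine ⟨?_, hξ2 i⟩
    have habs := abs_le.1 (hξ1 i)
    have hi0 : (0:ℝ) ≤ (i : ℝ) := Nat.cast_nonneg i
    constructor
    · nlinarith [habs.1, mul_nonneg hi0 hD0.le]
    · have hNle : (N : ℝ) ≤ Δ / (ε * (D + R)) := Nat.floor_le (by positivity)
      have hi1 : (i : ℝ) + 1 ≤ (N : ℝ) := by exact_mod_cast hiN
      have hu1 : ξf i ≤ ((i : ℝ) + 1) * (D + R) := by
        nlinarith [habs.2, mul_nonneg hi0 hR0]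
      have hu2 : ((i : ℝ) + 1) * (D + R) ≤ (N : ℝ) * (D + R) :=
        mul_le_mul_of_nonneg_right hi1 hc₀pos.le
      have hu3 : (N : ℝ) * (D + R) ≤ Δ / ε := by
        have h7 := mul_le_mul_of_nonneg_right hNle hc₀pos.le
        have h8 : Δ / (ε * (D + R)) * (D + R) = Δ / ε := by
          rw [← div_div, div_mul_cancel₀ _ (ne_of_gt hc₀pos)]
        linarith [h7, h8]
      linarith
  · have hmono : StrictMono ξf := by
      apply strictMono_nat_of_lt_succ
      intro i
      have h1 := abs_le.1 (hξ1 i)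
      have h2 := abs_le.1 (hξ1 (i + 1))
      push_cast at h2
      nlinarith [hWD, hR0, hD0]
    rw [Finset.card_image_of_injective _ hmono.injective, Finset.card_range]
end
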